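/- Let Θ₁ : ℝ × [1,∞) → ℝ be a measurable bounded function with |Θ₁| ≤ M, supported in {(η, τ) : η ∈ ℝ}. For m ≥ 2 and τ ≥ 1, define F(m√τ, τ) = (1/(m√τ)) PV ∫_0^∞ n²/((m² − n²)(n² + 1)) Θ₁(n√τ, τ) dn, where Θ₁(η,τ) = 2 for η ≤ δ√τ, Θ₁ smooth transition on [δ√τ, (δ + 1/√τ)√τ] with Lipschitz constant B√τ in the first variable, and Θ₁(η, τ) = 1 + w(τ) (a bounded function) for η ≥ (δ + 1/√τ)√τ, with δ ∈ (0,1/2]. Then |F(m√τ, τ)| ≤ C/(m³√τ) for a constant C depending only on δ, B, and sup|w|. -/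

import Mathlib

open MeasureTheory Real Filter

lemma int_inv_left (m b : ℝ) (hm : 0 < m) (hb0 : 0 ≤ b) (hbm : b < m) :
    ∫ n in (0:ℝ)..b, 1/(m^2 - n^2)
      = (1/(2*m)) * (Real.log (m+b) - Real.log (m-b)) := by
  have key : ∀ x ∈ Set.uIcc (0:ℝ) b,
      HasDerivAt (fun n => (1/(2*m)) * (Real.log (m+n) - Real.log (m-n)))
        (1/(m^2 - x^2)) x := by
    intro x hx
    rw [Set.uIcc_of_le hb0] at hx
    obtain ⟨hx0, hxb⟩ := hx
    have h1 : 0 < m + x := by linarith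
    have h2 : 0 < m - x := by linarith
    have d1 : HasDerivAt (fun n : ℝ => m + n) 1 x := (hasDerivAt_id x).const_add m
    have d2 : HasDerivAt (fun n : ℝ => m - n) (-1) x := (hasDerivAt_id x).const_sub m
    have := ((d1.log h1.ne').sub (d2.log h2.ne')).const_mul (1/(2*m))
    refine this.congr_deriv ?_
    have h3 : m^2 - x^2 ≠ 0 := by nlinarith
    field_simp
    ring
  rw [intervalIntegral.integral_eq_sub_of_hasDerivAt key]
  · have : Real.log (m + 0) - Real.log (m - 0) = 0 := by simp
    rw [show m + 0 = m by ring, show m - 0 = m by ring]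
    ring
  · apply ContinuousOn.intervalIntegrable
    apply continuousOn_const.div
    · fun_prop
    · intro x hx
      rw [Set.uIcc_of_le hb0] at hx
      nlinarith [hx.1, hx.2]

lemma int_inv_right (m c d : ℝ) (hm : 0 < m) (hc : m < c) (hcd : c ≤ d) :
    ∫ n in c..d, 1/(m^2 - n^2)
      = (1/(2*m)) * ((Real.log (d+m) - Real.log (d-m))
          - (Real.log (c+m) - Real.log (c-m))) := by
  have key : ∀ x ∈ Set.uIcc c d,
      HasDerivAt (fun n => (1/(2*m)) * (Real.log (n+m) - Real.log (n-m)))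
        (1/(m^2 - x^2)) x := by
    intro x hx
    rw [Set.uIcc_of_le hcd] at hx
    obtain ⟨hxc, hxd⟩ := hx
    have h1 : 0 < x + m := by linarith
    have h2 : 0 < x - m := by linarith
    have d1 : HasDerivAt (fun n : ℝ => n + m) 1 x := (hasDerivAt_id x).add_const m
    have d2 : HasDerivAt (fun n : ℝ => n - m) 1 x := (hasDerivAt_id x).sub_const m
    have := ((d1.log h1.ne').sub (d2.log h2.ne')).const_mul (1/(2*m))
    refine this.congr_deriv ?_
    have h3 : m^2 - x^2 ≠ 0 := by nlinarith
    field_simp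
    ring
  rw [intervalIntegral.integral_eq_sub_of_hasDerivAt key]
  · ring
  · apply ContinuousOn.intervalIntegrable
    apply continuousOn_const.div
    · fun_prop
    · intro x hx
      rw [Set.uIcc_of_le hcd] at hx
      nlinarith [hx.1, hx.2]

lemma tendsto_log_ratio (m : ℝ) (hm : 0 < m) :
    Tendsto (fun R : ℝ => Real.log (R + m) - Real.log (R - m)) atTop (nhds 0) := by
  have h1 : Tendsto (fun R : ℝ => 1 + 2*m/(R-m)) atTop (nhds 1) := by
    have := Tendsto.div_atTop (tendsto_const_nhds (x := (2*m:ℝ)))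
      (tendsto_atTop_add_const_right _ (-m) tendsto_id)
    simpa [sub_eq_add_neg] using tendsto_const_nhds.add this
  have h2 : Tendsto (fun R : ℝ => (R+m)/(R-m)) atTop (nhds 1) := by
    apply h1.congr'
    filter_upwards [eventually_gt_atTop m] with R hR
    have : R - m ≠ 0 := by linarith
    field_simp
    ring
  have h3 := (Real.continuousAt_log one_ne_zero).tendsto.comp h2
  rw [Real.log_one] at h3
  apply h3.congr'
  filter_upwards [eventually_gt_atTop m] with R hR
  have h1' : R + m > 0 := by linarith
  have h2' : R - m > 0 := by linarith
  simp [Function.comp, Real.log_div h1'.ne' h2'.ne']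

lemma arctan_integral (u v : ℝ) :
    ∫ n in u..v, 1/(n^2+1) = Real.arctan v - Real.arctan u := by
  rw [← integral_one_div_one_add_sq]
  apply intervalIntegral.integral_congr
  intro x _
  ring_nf

set_option maxHeartbeats 2000000 in
/-- Large-frequency bound for `F(m√τ, τ) = (1/(m√τ)) PV ∫₀^∞
n²/((m²−n²)(n²+1)) Θ₁(n√τ, τ) dn` where `Θ₁(·, τ)` equals `2` below `δ√τ`,
equals `1 + w(τ)` above `δ√τ + 1`, and is `B√τ`-Lipschitz in its first
variable.  The principal value exists and `|F(m√τ, τ)| ≤ C/(m³√τ)` with `C`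
depending only on `δ`, `B` and `sup |w|`. -/
theorem stmt16 (δ B W : ℝ) (hδ0 : 0 < δ) (hδ : δ ≤ 1/2) (hB : 0 < B) (hW : 0 ≤ W) :
    ∃ C > 0, ∀ τ : ℝ, 1 ≤ τ → ∀ w : ℝ → ℝ, (∀ t, |w t| ≤ W) →
      ∀ Θ₁ : ℝ → ℝ → ℝ,
        Measurable (fun η => Θ₁ η τ) →
        (∀ η, η ≤ δ * Real.sqrt τ → Θ₁ η τ = 2) →
        (∀ η, δ * Real.sqrt τ + 1 ≤ η → Θ₁ η τ = 1 + w τ) →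
        (∀ η₁ η₂, |Θ₁ η₁ τ - Θ₁ η₂ τ| ≤ B * Real.sqrt τ * |η₁ - η₂|) →
        ∀ m : ℝ, 2 ≤ m →
          ∃ I : ℝ,
            Filter.Tendsto
              (fun p : ℝ × ℝ =>
                (∫ n in (0:ℝ)..(m - p.1),
                  n ^ 2 / ((m ^ 2 - n ^ 2) * (n ^ 2 + 1)) *
                    Θ₁ (n * Real.sqrt τ) τ) +
                ∫ n in (m + p.1)..p.2,
                  n ^ 2 / ((m ^ 2 - n ^ 2) * (n ^ 2 + 1)) *
                    Θ₁ (n * Real.sqrt τ) τ)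
              ((nhdsWithin 0 (Set.Ioi 0)) ×ˢ Filter.atTop) (nhds I) ∧
            |(1 / (m * Real.sqrt τ)) * I| ≤ C / (m ^ 3 * Real.sqrt τ) := by
  refine ⟨3*B + 6*(1+W), by positivity, ?_⟩
  intro τ hτ w hw Θ₁ hmeas hlow hhigh hlip m hm
  set s := Real.sqrt τ with hs
  have hs1 : 1 ≤ s := Real.one_le_sqrt.mpr hτ
  have hs0 : 0 < s := by linarith
  have hm0 : 0 < m := by linarith
  set f : ℝ → ℝ := fun n => n ^ 2 / ((m ^ 2 - n ^ 2) * (n ^ 2 + 1)) * Θ₁ (n * s) τ with hf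
  set a : ℝ := 1 + w τ with ha
  have hwa := abs_le.mp (hw τ)
  set g : ℝ → ℝ := fun n => n ^ 2 / ((m ^ 2 - n ^ 2) * (n ^ 2 + 1)) * (Θ₁ (n * s) τ - a) with hg
  set δ' : ℝ := δ + 1/s with hδ'
  have hsinv : 1/s ≤ 1 := by rw [div_le_one hs0]; linarith
  have hsinv0 : 0 < 1/s := by positivity
  have hδ'le : δ' ≤ 3/2 := by rw [hδ']; linarith
  have hδδ' : δ ≤ δ' := by rw [hδ']; linarith
  -- g vanishes above δ'
  have hgz : ∀ n : ℝ, δ' ≤ n → g n = 0 := by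
    intro n hn
    have : δ * s + 1 ≤ n * s := by
      have : δ' * s ≤ n * s := mul_le_mul_of_nonneg_right hn hs0.le
      calc δ * s + 1 = δ' * s := by rw [hδ']; field_simp
      _ ≤ n * s := this
    rw [hg]
    simp only [hhigh (n*s) this, ← ha, sub_self, mul_zero]
  -- continuity of the profile
  have hΘc : Continuous (fun n : ℝ => Θ₁ (n * s) τ) := by
    have lip : LipschitzWith (Real.toNNReal (B*s)) (fun η => Θ₁ η τ) := by
      apply LipschitzWith.of_dist_le_mul
      intro x y
      rw [Real.dist_eq, Real.dist_eq, Real.coe_toNNReal _ (by positivity)]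
      exact hlip x y
    exact lip.continuous.comp (continuous_id.mul continuous_const)
  -- integrability helpers
  have hgInt : ∀ u v : ℝ, (∀ n ∈ Set.uIcc u v, m^2 - n^2 ≠ 0) →
      IntervalIntegrable g volume u v := by
    intro u v hne
    apply ContinuousOn.intervalIntegrable
    apply ContinuousOn.mul
    · apply ContinuousOn.div (by fun_prop) (by fun_prop)
      intro n hn
      exact mul_ne_zero (hne n hn) (by positivity)
    · exact (hΘc.sub continuous_const).continuousOn
  have hfInt : ∀ u v : ℝ, (∀ n ∈ Set.uIcc u v, m^2 - n^2 ≠ 0) →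
      IntervalIntegrable f volume u v := by
    intro u v hne
    apply ContinuousOn.intervalIntegrable
    apply ContinuousOn.mul
    · apply ContinuousOn.div (by fun_prop) (by fun_prop)
      intro n hn
      exact mul_ne_zero (hne n hn) (by positivity)
    · exact hΘc.continuousOn
  have hφInt : ∀ u v : ℝ, (∀ n ∈ Set.uIcc u v, m^2 - n^2 ≠ 0) →
      IntervalIntegrable (fun n => 1/(m^2 - n^2)) volume u v := by
    intro u v hne
    apply ContinuousOn.intervalIntegrable
    exact continuousOn_const.div (by fun_prop) hne
  have hψInt : ∀ u v : ℝ, IntervalIntegrable (fun n : ℝ => 1/(n^2+1)) volume u v := by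
    intro u v
    apply Continuous.intervalIntegrable
    exact continuous_const.div (by fun_prop) (fun x => by positivity)
  set c₁ : ℝ := a*m^2/(m^2+1) with hc₁
  set c₂ : ℝ := a/(m^2+1) with hc₂
  -- partial fractions
  have pf : ∀ n : ℝ, m^2 - n^2 ≠ 0 →
      f n = c₁ * (1/(m^2 - n^2)) - c₂ * (1/(n^2+1)) + g n := by
    intro n hn
    have h1 : (n:ℝ)^2 + 1 ≠ 0 := by positivity
    have h2 : m^2 + 1 ≠ 0 := by positivity
    rw [hf, hg, hc₁, hc₂]
    field_simp
    ring
  set G₀ : ℝ := ∫ n in (0:ℝ)..δ', g n with hG₀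
  set I : ℝ := G₀ - c₂ * (π/2) with hI
  clear_value s f a g δ' c₁ c₂ G₀ I
  refine ⟨I, ?_, ?_⟩
  · -- the limit
    have hA : Tendsto (fun ε : ℝ => Real.log (2*m - ε) - Real.log (2*m + ε))
        (nhdsWithin 0 (Set.Ioi 0)) (nhds 0) := by
      have c1 : ContinuousAt (fun ε : ℝ => Real.log (2*m - ε) - Real.log (2*m + ε)) 0 := by
        apply ContinuousAt.sub
        · exact (Real.continuousAt_log (ne_of_gt (by linarith : (0:ℝ) < 2*m - 0))).comp
            ((continuous_const.sub continuous_id).continuousAt)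
        · exact (Real.continuousAt_log (ne_of_gt (by linarith : (0:ℝ) < 2*m + 0))).comp
            ((continuous_const.add continuous_id).continuousAt)
      have := c1.tendsto.mono_left (nhdsWithin_le_nhds (s := Set.Ioi (0:ℝ)))
      simpa using this
    have hC : Tendsto (fun ε : ℝ => Real.arctan (m - ε)) (nhdsWithin 0 (Set.Ioi 0))
        (nhds (Real.arctan m)) := by
      have c1 : ContinuousAt (fun ε : ℝ => Real.arctan (m - ε)) 0 :=
        (Real.continuous_arctan.comp (continuous_const.sub continuous_id)).continuousAt
      have := c1.tendsto.mono_left (nhdsWithin_le_nhds (s := Set.Ioi (0:ℝ)))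
      simpa using this
    have hD : Tendsto (fun ε : ℝ => Real.arctan (m + ε)) (nhdsWithin 0 (Set.Ioi 0))
        (nhds (Real.arctan m)) := by
      have c1 : ContinuousAt (fun ε : ℝ => Real.arctan (m + ε)) 0 :=
        (Real.continuous_arctan.comp (continuous_const.add continuous_id)).continuousAt
      have := c1.tendsto.mono_left (nhdsWithin_le_nhds (s := Set.Ioi (0:ℝ)))
      simpa using this
    have hE : Tendsto Real.arctan atTop (nhds (π/2)) :=
      Real.tendsto_arctan_atTop.mono_right nhdsWithin_le_nhds
    have t1 : Tendsto (fun p : ℝ × ℝ =>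
        (Real.log (2*m - p.1) - Real.log (2*m + p.1))
          + (Real.log (p.2 + m) - Real.log (p.2 - m)))
        ((nhdsWithin 0 (Set.Ioi 0)) ×ˢ atTop) (nhds (0 + 0)) :=
      (hA.comp tendsto_fst).add ((tendsto_log_ratio m hm0).comp tendsto_snd)
    have t2 : Tendsto (fun p : ℝ × ℝ =>
        Real.arctan (m - p.1) + Real.arctan p.2 - Real.arctan (m + p.1))
        ((nhdsWithin 0 (Set.Ioi 0)) ×ˢ atTop)
        (nhds (Real.arctan m + π/2 - Real.arctan m)) :=
      ((hC.comp tendsto_fst).add (hE.comp tendsto_snd)).sub (hD.comp tendsto_fst)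
    have tT : Tendsto (fun p : ℝ × ℝ =>
        c₁ * ((1/(2*m)) * ((Real.log (2*m - p.1) - Real.log (2*m + p.1))
            + (Real.log (p.2 + m) - Real.log (p.2 - m))))
          - c₂ * (Real.arctan (m - p.1) + Real.arctan p.2 - Real.arctan (m + p.1)) + G₀)
        ((nhdsWithin 0 (Set.Ioi 0)) ×ˢ atTop) (nhds I) := by
      have h0 := (((t1.const_mul (1/(2*m))).const_mul c₁).sub (t2.const_mul c₂)).add_const G₀
      have hval : c₁ * ((1/(2*m)) * (0 + 0))
          - c₂ * (Real.arctan m + π/2 - Real.arctan m) + G₀ = I := by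
        rw [hI]; ring
      rw [hval] at h0
      exact h0
    -- eventual equality with the explicit formula
    have hev : ∀ᶠ p : ℝ × ℝ in (nhdsWithin 0 (Set.Ioi 0)) ×ˢ atTop,
        (c₁ * ((1/(2*m)) * ((Real.log (2*m - p.1) - Real.log (2*m + p.1))
            + (Real.log (p.2 + m) - Real.log (p.2 - m))))
          - c₂ * (Real.arctan (m - p.1) + Real.arctan p.2 - Real.arctan (m + p.1)) + G₀)
        = (∫ n in (0:ℝ)..(m - p.1), f n) + ∫ n in (m + p.1)..p.2, f n := by
      have e1 : ∀ᶠ ε in nhdsWithin (0:ℝ) (Set.Ioi 0), ε ∈ Set.Ioo (0:ℝ) (1/2) :=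
        Ioo_mem_nhdsGT_of_mem ⟨le_refl 0, by norm_num⟩
      filter_upwards [e1.prod_mk (eventually_ge_atTop (m+1))] with p hp
      obtain ⟨⟨hε0, hε2⟩, hR⟩ := hp
      have hne1 : ∀ n ∈ Set.uIcc (0:ℝ) (m - p.1), m^2 - n^2 ≠ 0 := by
        intro n hn
        rw [Set.uIcc_of_le (show (0:ℝ) ≤ m - p.1 by linarith)] at hn
        have h1 : n < m := by linarith [hn.2]
        have h2 : -m < n := by linarith [hn.1]
        exact ne_of_gt (by nlinarith)
      have hne1a : ∀ n ∈ Set.uIcc (0:ℝ) δ', m^2 - n^2 ≠ 0 := by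
        intro n hn
        rw [Set.uIcc_of_le (show (0:ℝ) ≤ δ' by linarith)] at hn
        have h1 : n < m := by linarith [hn.2]
        have h2 : -m < n := by linarith [hn.1]
        exact ne_of_gt (by nlinarith)
      have hne1b : ∀ n ∈ Set.uIcc δ' (m - p.1), m^2 - n^2 ≠ 0 := by
        intro n hn
        rw [Set.uIcc_of_le (show δ' ≤ m - p.1 by linarith)] at hn
        have h1 : n < m := by linarith [hn.2]
        have h2 : -m < n := by nlinarith [hn.1]
        exact ne_of_gt (by nlinarith)
      have hne2 : ∀ n ∈ Set.uIcc (m + p.1) p.2, m^2 - n^2 ≠ 0 := by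
        intro n hn
        rw [Set.uIcc_of_le (show m + p.1 ≤ p.2 by linarith)] at hn
        have h1 : m < n := by linarith [hn.1]
        exact ne_of_lt (by nlinarith)
      have L1 : (∫ n in (0:ℝ)..(m - p.1), f n)
          = c₁ * ((1/(2*m)) * (Real.log (2*m - p.1) - Real.log p.1))
            - c₂ * (Real.arctan (m - p.1) - Real.arctan 0) + G₀ := by
        rw [intervalIntegral.integral_congr
          (g := fun n => c₁ * (1/(m^2 - n^2)) - c₂ * (1/(n^2+1)) + g n)
          (fun n hn => pf n (hne1 n hn))]
        rw [intervalIntegral.integral_add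
          (((hφInt _ _ hne1).const_mul c₁).sub ((hψInt _ _).const_mul c₂))
          (hgInt _ _ hne1)]
        rw [intervalIntegral.integral_sub ((hφInt _ _ hne1).const_mul c₁)
          ((hψInt _ _).const_mul c₂)]
        rw [intervalIntegral.integral_const_mul, intervalIntegral.integral_const_mul]
        rw [int_inv_left m (m - p.1) hm0 (by linarith) (by linarith)]
        rw [arctan_integral]
        rw [show m + (m - p.1) = 2*m - p.1 by ring, show m - (m - p.1) = p.1 by ring]
        have z : (∫ n in δ'..(m - p.1), g n) = 0 := by
          rw [intervalIntegral.integral_congr (g := fun _ => (0:ℝ))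
            (fun n hn => ?_), intervalIntegral.integral_zero]
          rw [Set.uIcc_of_le (show δ' ≤ m - p.1 by linarith)] at hn
          exact hgz n hn.1
        rw [← intervalIntegral.integral_add_adjacent_intervals
          (hgInt 0 δ' hne1a) (hgInt δ' (m - p.1) hne1b), z, ← hG₀]
        ring
      have L2 : (∫ n in (m + p.1)..p.2, f n)
          = c₁ * ((1/(2*m)) * ((Real.log (p.2 + m) - Real.log (p.2 - m))
              - (Real.log (2*m + p.1) - Real.log p.1)))
            - c₂ * (Real.arctan p.2 - Real.arctan (m + p.1)) := by
        rw [intervalIntegral.integral_congr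
          (g := fun n => c₁ * (1/(m^2 - n^2)) - c₂ * (1/(n^2+1)) + g n)
          (fun n hn => pf n (hne2 n hn))]
        rw [intervalIntegral.integral_add
          (((hφInt _ _ hne2).const_mul c₁).sub ((hψInt _ _).const_mul c₂))
          (hgInt _ _ hne2)]
        rw [intervalIntegral.integral_sub ((hφInt _ _ hne2).const_mul c₁)
          ((hψInt _ _).const_mul c₂)]
        rw [intervalIntegral.integral_const_mul, intervalIntegral.integral_const_mul]
        rw [int_inv_right m (m + p.1) p.2 hm0 (by linarith) (by linarith)]
        rw [arctan_integral]
        rw [show m + p.1 + m = 2*m + p.1 by ring, show m + p.1 - m = p.1 by ring]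
        have z : (∫ n in (m + p.1)..p.2, g n) = 0 := by
          rw [intervalIntegral.integral_congr (g := fun _ => (0:ℝ))
            (fun n hn => ?_), intervalIntegral.integral_zero]
          rw [Set.uIcc_of_le (show m + p.1 ≤ p.2 by linarith)] at hn
          exact hgz n (by linarith [hn.1, hδ'le])
        rw [z]
        ring
      rw [L1, L2, Real.arctan_zero]
      ring
    exact tT.congr' hev
  · -- the bound
    have hQ : (0:ℝ) < 1/m^2 := by positivity
    have hXb : ∀ n : ℝ, 0 ≤ n → n ≤ 3/2 →
        |n ^ 2 / ((m ^ 2 - n ^ 2) * (n ^ 2 + 1))| ≤ 16/7 * (1/m^2) := by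
      intro n hn0 hn2
      have hden : 0 < m^2 - n^2 := by nlinarith
      rw [abs_of_nonneg (by positivity)]
      rw [show (16:ℝ)/7 * (1/m^2) = 16/(7*m^2) by ring]
      rw [div_le_div_iff₀ (by positivity) (by positivity)]
      nlinarith [mul_nonneg (by nlinarith : (0:ℝ) ≤ m^2 - 4) (sq_nonneg n),
        mul_nonneg (by nlinarith : (0:ℝ) ≤ 9/4 - n^2) (sq_nonneg n), sq_nonneg n]
    have h1W : |1 - w τ| ≤ 1 + W := abs_le.mpr ⟨by linarith [hwa.2], by linarith [hwa.1]⟩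
    have hne1a : ∀ n ∈ Set.uIcc (0:ℝ) δ, m^2 - n^2 ≠ 0 := by
      intro n hn
      rw [Set.uIcc_of_le (show (0:ℝ) ≤ δ by linarith)] at hn
      have h1 : n < m := by linarith [hn.2]
      have h2 : -m < n := by linarith [hn.1]
      exact ne_of_gt (by nlinarith)
    have hne1b : ∀ n ∈ Set.uIcc δ δ', m^2 - n^2 ≠ 0 := by
      intro n hn
      rw [Set.uIcc_of_le (show δ ≤ δ' by linarith)] at hn
      have h1 : n < m := by linarith [hn.2]
      have h2 : -m < n := by linarith [hn.1]
      exact ne_of_gt (by nlinarith)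
    have hG1 : ‖∫ n in (0:ℝ)..δ, g n‖ ≤ (16/7 * (1/m^2) * (1+W)) * |δ - 0| := by
      apply intervalIntegral.norm_integral_le_of_norm_le_const
      intro n hn
      rw [Set.uIoc_of_le hδ0.le] at hn
      have h2 : Θ₁ (n * s) τ = 2 :=
        hlow (n * s) (mul_le_mul_of_nonneg_right hn.2 hs0.le)
      rw [hg]
      rw [Real.norm_eq_abs, abs_mul, h2]
      have : |2 - a| ≤ 1 + W := by rw [ha]; rw [show (2:ℝ) - (1 + w τ) = 1 - w τ by ring]; exact h1W
      exact mul_le_mul (hXb n hn.1.le (by linarith [hn.2])) this (abs_nonneg _) (by positivity)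
    have hG2 : ‖∫ n in δ..δ', g n‖ ≤ (16/7 * (1/m^2) * (B*s + (1+W))) * |δ' - δ| := by
      apply intervalIntegral.norm_integral_le_of_norm_le_const
      intro n hn
      rw [Set.uIoc_of_le hδδ'] at hn
      rw [hg, Real.norm_eq_abs, abs_mul]
      have hb : |Θ₁ (n * s) τ - a| ≤ B*s + (1+W) := by
        have e2 : Θ₁ (δ * s) τ = 2 := hlow (δ * s) le_rfl
        calc |Θ₁ (n * s) τ - a|
            = |(Θ₁ (n * s) τ - Θ₁ (δ * s) τ) + (2 - a)| := by rw [e2]; ring_nf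
          _ ≤ |Θ₁ (n * s) τ - Θ₁ (δ * s) τ| + |2 - a| := abs_add_le _ _
          _ ≤ B * s * |n * s - δ * s| + (1 + W) := by
              refine add_le_add (hlip _ _) ?_
              rw [ha, show (2:ℝ) - (1 + w τ) = 1 - w τ by ring]; exact h1W
          _ ≤ B * s * 1 + (1 + W) := by
              refine add_le_add (mul_le_mul_of_nonneg_left ?_ (by positivity)) le_rfl
              rw [show n * s - δ * s = (n - δ) * s by ring,
                abs_of_nonneg (by nlinarith [hn.1.le, hs0.le] : (0:ℝ) ≤ (n - δ) * s)]
              have : n - δ ≤ 1/s := by have := hn.2; rw [hδ'] at this; linarith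
              calc (n - δ) * s ≤ (1/s) * s := mul_le_mul_of_nonneg_right this hs0.le
                _ = 1 := by field_simp
          _ = B*s + (1+W) := by ring
      exact mul_le_mul (hXb n (by linarith [hn.1]) (by linarith [hn.2, hδ'le]))
        hb (abs_nonneg _) (by positivity)
    have hG0 : |G₀| ≤ 16/7 * (1/m^2) * ((1+W)/2 + (B + (1+W))) := by
      have hsplit : G₀ = (∫ n in (0:ℝ)..δ, g n) + ∫ n in δ..δ', g n := by
        rw [hG₀, ← intervalIntegral.integral_add_adjacent_intervals
          (hgInt 0 δ hne1a) (hgInt δ δ' hne1b)]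
      rw [hsplit]
      have habs := abs_add_le (∫ n in (0:ℝ)..δ, g n) (∫ n in δ..δ', g n)
      have e1 : |δ - 0| = δ := by rw [sub_zero, abs_of_pos hδ0]
      have e2 : |δ' - δ| = 1/s := by rw [hδ']; rw [show δ + 1/s - δ = 1/s by ring]; exact abs_of_pos hsinv0
      rw [Real.norm_eq_abs] at hG1 hG2
      rw [e1] at hG1
      rw [e2] at hG2
      have key2 : 16/7 * (1/m^2) * (B*s + (1+W)) * (1/s) ≤ 16/7 * (1/m^2) * (B + (1+W)) := by
        have hss : s * (1/s) = 1 := by field_simp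
        have h1s : (1+W) * (1/s) ≤ (1+W) * 1 := by
          apply mul_le_mul_of_nonneg_left hsinv (by linarith)
        calc 16/7 * (1/m^2) * (B*s + (1+W)) * (1/s)
            = 16/7 * (1/m^2) * (B * (s * (1/s)) + (1+W) * (1/s)) := by ring
          _ = 16/7 * (1/m^2) * (B + (1+W) * (1/s)) := by rw [hss]; ring_nf
          _ ≤ 16/7 * (1/m^2) * (B + (1+W)) := by
              apply mul_le_mul_of_nonneg_left _ (by positivity)
              linarith
      have key1 : 16/7 * (1/m^2) * (1+W) * δ ≤ 16/7 * (1/m^2) * ((1+W)/2) := by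
        have : (1+W) * δ ≤ (1+W) * (1/2) := mul_le_mul_of_nonneg_left hδ (by linarith)
        calc 16/7 * (1/m^2) * (1+W) * δ = 16/7 * (1/m^2) * ((1+W) * δ) := by ring
          _ ≤ 16/7 * (1/m^2) * ((1+W) * (1/2)) := by
              apply mul_le_mul_of_nonneg_left this (by positivity)
          _ = 16/7 * (1/m^2) * ((1+W)/2) := by ring
      linarith
    have hc2 : |c₂| ≤ (1+W) * (1/m^2) := by
      rw [hc₂, abs_div, abs_of_pos (by positivity : (0:ℝ) < m^2 + 1)]
      have haW : |a| ≤ 1 + W := by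
        rw [ha]
        exact abs_le.mpr ⟨by linarith [hwa.1], by linarith [hwa.2]⟩
      calc |a| / (m^2 + 1) ≤ (1+W) / m^2 :=
            div_le_div₀ (by linarith) haW (by positivity) (by nlinarith [sq_nonneg m])
        _ = (1+W) * (1/m^2) := by ring
    have hIb : |I| ≤ (3*B + 6*(1+W)) * (1/m^2) := by
      have h1 : |I| ≤ |G₀| + |c₂| * (π/2) := by
        rw [hI]
        calc |G₀ - c₂ * (π/2)| ≤ |G₀| + |c₂ * (π/2)| := abs_sub _ _
          _ = |G₀| + |c₂| * (π/2) := by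
              rw [abs_mul, abs_of_pos (by positivity : (0:ℝ) < π/2)]
      have h2 : |c₂| * (π/2) ≤ ((1+W) * (1/m^2)) * 2 :=
        mul_le_mul hc2 (by linarith [Real.pi_le_four]) (by positivity) (by positivity)
      nlinarith [mul_nonneg hQ.le hB.le, mul_nonneg hQ.le hW, hG0, hQ.le]
    rw [abs_mul, abs_of_pos (show (0:ℝ) < 1/(m*s) by positivity)]
    have hmul : 1/(m*s) * |I| ≤ 1/(m*s) * ((3*B + 6*(1+W)) * (1/m^2)) :=
      mul_le_mul_of_nonneg_left hIb (by positivity)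
    have heq : 1/(m*s) * ((3*B + 6*(1+W)) * (1/m^2)) = (3*B + 6*(1+W)) / (m^3*s) := by
      field_simp
    rw [heq] at hmul
    exact hmul
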